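/- Resolution-style validity splitting: for any formulas represented as X = A ∪ B ∪ E_1 (clauses, with each clause of A containing l, each of B containing l*, E_1 containing neither) and Y = C ∪ D ∪ E_2 (conjunctions of literals, each of C containing l*, each of D containing l, E_2 containing neither), the implication ⋀X → ⋁Y is valid if and only if both ⋀(A \ l) ∧ ⋀E_1 → ⋁(C \ l*) ∨ ⋁E_2 and ⋀(B \ l*) ∧ ⋀E_1 → ⋁(D \ l) ∨ ⋁E_2 are valid, where A \ l denotes the clauses of A with l removed, etc. -/
import Mathlib


/-- Propositional formulas over variables indexed by naturals. -/
inductive PropForm where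
  | var : Nat → PropForm
  | fls : PropForm
  | tru : PropForm
  | neg : PropForm → PropForm
  | conj : PropForm → PropForm → PropForm
  | disj : PropForm → PropForm → PropForm
deriving DecidableEq

/-- Classical Boolean evaluation of a formula under a valuation. -/
def PropForm.eval (v : Nat → Bool) : PropForm → Bool
  | .var n => v n
  | .fls => false
  | .tru => true
  | .neg A => !(A.eval v)
  | .conj A B => A.eval v && B.eval v
  | .disj A B => A.eval v || B.eval v

/-- The propositional variables occurring in a formula. -/
def PropForm.vars : PropForm → Finset Nat
  | .var n => {n}
  | .fls => ∅
  | .tru => ∅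
  | .neg A => A.vars
  | .conj A B => A.vars ∪ B.vars
  | .disj A B => A.vars ∪ B.vars

/-- A formula is valid iff true under every valuation. -/
def PropForm.Valid (A : PropForm) : Prop := ∀ v : Nat → Bool, A.eval v = true

/-- Literals: a variable or its negation. -/
inductive Lit where
  | pos : Nat → Lit
  | neg : Nat → Lit
deriving DecidableEq

/-- The complement of a literal. -/
def Lit.compl : Lit → Lit
  | .pos n => .neg n
  | .neg n => .pos n

/-- The variable of a literal. -/
def Lit.var : Lit → Nat
  | .pos n => n
  | .neg n => n

/-- Evaluation of a literal. -/
def Lit.eval (v : Nat → Bool) : Lit → Bool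
  | .pos n => v n
  | .neg n => !(v n)

/-- A literal as a formula. -/
def Lit.toForm : Lit → PropForm
  | .pos n => .var n
  | .neg n => .neg (.var n)

/-- A clause (finite set of literals read disjunctively) is satisfied by `v`. -/
def clauseSat (v : Nat → Bool) (C : Finset Lit) : Prop := ∃ l ∈ C, l.eval v = true

/-- A conjunction of literals (finite set read conjunctively) is satisfied by `v`. -/
def cubeSat (v : Nat → Bool) (C : Finset Lit) : Prop := ∀ l ∈ C, l.eval v = true

lemma Lit.compl_compl (l : Lit) : l.compl.compl = l := by cases l <;> rfl

lemma Lit.compl_var (l : Lit) : l.compl.var = l.var := by cases l <;> rfl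

lemma Lit.eq_or_eq_compl {m l : Lit} (h : m.var = l.var) : m = l ∨ m = l.compl := by
  cases m <;> cases l <;> simp [Lit.var] at h <;> subst h <;> simp [Lit.compl]

/-- value to assign at `l.var` so that `l` evaluates to `c`. -/
def Lit.setVal : Lit → Bool → Bool
  | .pos _, c => c
  | .neg _, c => !c

lemma Lit.eval_update_of_ne {m : Lit} {n : Nat} (h : m.var ≠ n) (v : Nat → Bool) (b : Bool) :
    m.eval (Function.update v n b) = m.eval v := by
  cases m <;> simp only [Lit.eval, Lit.var] at * <;> rw [Function.update_of_ne h]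

lemma Lit.eval_update_self (l : Lit) (v : Nat → Bool) (c : Bool) :
    l.eval (Function.update v l.var (l.setVal c)) = c := by
  cases l <;> simp [Lit.eval, Lit.var, Lit.setVal]

lemma Lit.eval_update_compl (l : Lit) (v : Nat → Bool) (c : Bool) :
    l.compl.eval (Function.update v l.var (l.setVal c)) = !c := by
  cases l <;> simp [Lit.eval, Lit.var, Lit.setVal, Lit.compl]

lemma Lit.compl_eval (l : Lit) (v : Nat → Bool) : l.compl.eval v = !(l.eval v) := by
  cases l <;> simp [Lit.eval, Lit.compl]

lemma helper_fwd (l : Lit) (A B E₁ C D E₂ : Finset (Finset Lit))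
    (hA : ∀ Cl ∈ A, l ∈ Cl)
    (hB : ∀ Cl ∈ B, l.compl ∈ Cl)
    (hE₁ : ∀ Cl ∈ E₁, l ∉ Cl ∧ l.compl ∉ Cl)
    (hD : ∀ Cu ∈ D, l ∈ Cu)
    (hE₂ : ∀ Cu ∈ E₂, l ∉ Cu ∧ l.compl ∉ Cu)
    (h : ∀ v : Nat → Bool, (∀ Cl ∈ A ∪ B ∪ E₁, clauseSat v Cl) →
        ∃ Cu ∈ C ∪ D ∪ E₂, cubeSat v Cu) :
    ∀ v : Nat → Bool,
      ((∀ Cl ∈ A, clauseSat v (Cl.erase l)) ∧ (∀ Cl ∈ E₁, clauseSat v Cl)) →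
      (∃ Cu ∈ C, cubeSat v (Cu.erase l.compl)) ∨ (∃ Cu ∈ E₂, cubeSat v Cu) := by
  intro v ⟨hAv, hE₁v⟩
  set v' := Function.update v l.var (l.setVal false) with hv'
  have hlf : l.eval v' = false := Lit.eval_update_self l v false
  have hlc : l.compl.eval v' = true := Lit.eval_update_compl l v false
  obtain ⟨Cu, hCu, hsat⟩ := h v' (by
    intro Cl hCl
    rcases Finset.mem_union.1 hCl with hCl' | hClE
    · rcases Finset.mem_union.1 hCl' with hClA | hClB
      · obtain ⟨m, hm, hme⟩ := hAv Cl hClA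
        refine ⟨m, Finset.mem_of_mem_erase hm, ?_⟩
        by_cases hvar : m.var = l.var
        · rcases Lit.eq_or_eq_compl hvar with rfl | rfl
          · exact absurd rfl (Finset.ne_of_mem_erase hm)
          · exact hlc
        · rw [Lit.eval_update_of_ne hvar]; exact hme
      · exact ⟨l.compl, hB Cl hClB, hlc⟩
    · obtain ⟨m, hm, hme⟩ := hE₁v Cl hClE
      refine ⟨m, hm, ?_⟩
      have hvar : m.var ≠ l.var := by
        intro hvar
        rcases Lit.eq_or_eq_compl hvar with rfl | rfl
        · exact (hE₁ Cl hClE).1 hm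
        · exact (hE₁ Cl hClE).2 hm
      rw [Lit.eval_update_of_ne hvar]; exact hme)
  rcases Finset.mem_union.1 hCu with hCu' | hCuE
  · rcases Finset.mem_union.1 hCu' with hCuC | hCuD
    · left
      refine ⟨Cu, hCuC, ?_⟩
      intro m hm
      have hmCu := Finset.mem_of_mem_erase hm
      have hne : m ≠ l := by
        rintro rfl
        have := hsat m hmCu
        rw [hlf] at this; exact Bool.false_ne_true this
      have hvar : m.var ≠ l.var := by
        intro hvar
        rcases Lit.eq_or_eq_compl hvar with rfl | rfl
        · exact hne rfl
        · exact Finset.ne_of_mem_erase hm rfl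
      rw [← Lit.eval_update_of_ne hvar v (l.setVal false)]
      exact hsat m hmCu
    · exfalso
      have := hsat l (hD Cu hCuD)
      rw [hlf] at this; exact Bool.false_ne_true this
  · right
    refine ⟨Cu, hCuE, ?_⟩
    intro m hm
    have hvar : m.var ≠ l.var := by
      intro hvar
      rcases Lit.eq_or_eq_compl hvar with rfl | rfl
      · exact (hE₂ Cu hCuE).1 hm
      · exact (hE₂ Cu hCuE).2 hm
    rw [← Lit.eval_update_of_ne hvar v (l.setVal false)]
    exact hsat m hm

lemma helper_bwd (l : Lit) (A B E₁ C D E₂ : Finset (Finset Lit))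
    (h1 : ∀ v : Nat → Bool,
        ((∀ Cl ∈ A, clauseSat v (Cl.erase l)) ∧ (∀ Cl ∈ E₁, clauseSat v Cl)) →
        (∃ Cu ∈ C, cubeSat v (Cu.erase l.compl)) ∨ (∃ Cu ∈ E₂, cubeSat v Cu))
    (v : Nat → Bool) (hlf : l.eval v = false)
    (hX : ∀ Cl ∈ A ∪ B ∪ E₁, clauseSat v Cl) :
    ∃ Cu ∈ C ∪ D ∪ E₂, cubeSat v Cu := by
  have hlc : l.compl.eval v = true := by rw [Lit.compl_eval, hlf]; rfl
  have hA' : ∀ Cl ∈ A, clauseSat v (Cl.erase l) := by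
    intro Cl hCl
    obtain ⟨m, hm, hme⟩ := hX Cl (Finset.mem_union_left _ (Finset.mem_union_left _ hCl))
    refine ⟨m, Finset.mem_erase.2 ⟨?_, hm⟩, hme⟩
    rintro rfl; rw [hlf] at hme; exact Bool.false_ne_true hme
  have hE₁' : ∀ Cl ∈ E₁, clauseSat v Cl := fun Cl hCl => hX Cl (Finset.mem_union_right _ hCl)
  rcases h1 v ⟨hA', hE₁'⟩ with ⟨Cu, hCu, hsat⟩ | ⟨Cu, hCu, hsat⟩
  · refine ⟨Cu, Finset.mem_union_left _ (Finset.mem_union_left _ hCu), ?_⟩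
    intro m hm
    by_cases hme : m = l.compl
    · subst hme; exact hlc
    · exact hsat m (Finset.mem_erase.2 ⟨hme, hm⟩)
  · exact ⟨Cu, Finset.mem_union_right _ hCu, hsat⟩

theorem stmt17 (l : Lit) (A B E₁ C D E₂ : Finset (Finset Lit))
    (hA : ∀ Cl ∈ A, l ∈ Cl)
    (hB : ∀ Cl ∈ B, l.compl ∈ Cl)
    (hE₁ : ∀ Cl ∈ E₁, l ∉ Cl ∧ l.compl ∉ Cl)
    (hC : ∀ Cu ∈ C, l.compl ∈ Cu)
    (hD : ∀ Cu ∈ D, l ∈ Cu)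
    (hE₂ : ∀ Cu ∈ E₂, l ∉ Cu ∧ l.compl ∉ Cu) :
    (∀ v : Nat → Bool, (∀ Cl ∈ A ∪ B ∪ E₁, clauseSat v Cl) →
        ∃ Cu ∈ C ∪ D ∪ E₂, cubeSat v Cu) ↔
      ((∀ v : Nat → Bool,
          ((∀ Cl ∈ A, clauseSat v (Cl.erase l)) ∧ (∀ Cl ∈ E₁, clauseSat v Cl)) →
          (∃ Cu ∈ C, cubeSat v (Cu.erase l.compl)) ∨ (∃ Cu ∈ E₂, cubeSat v Cu)) ∧
       (∀ v : Nat → Bool,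
          ((∀ Cl ∈ B, clauseSat v (Cl.erase l.compl)) ∧ (∀ Cl ∈ E₁, clauseSat v Cl)) →
          (∃ Cu ∈ D, cubeSat v (Cu.erase l)) ∨ (∃ Cu ∈ E₂, cubeSat v Cu))) := by
  constructor
  · intro h
    refine ⟨helper_fwd l A B E₁ C D E₂ hA hB hE₁ hD hE₂ h, ?_⟩
    have h' : ∀ v : Nat → Bool, (∀ Cl ∈ B ∪ A ∪ E₁, clauseSat v Cl) →
        ∃ Cu ∈ D ∪ C ∪ E₂, cubeSat v Cu := by
      intro v hv
      rw [Finset.union_comm D C]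
      exact h v (by rwa [Finset.union_comm B A] at hv)
    have := helper_fwd l.compl B A E₁ D C E₂ hB
      (by simpa [Lit.compl_compl] using hA)
      (fun Cl hCl => ⟨(hE₁ Cl hCl).2, by rw [Lit.compl_compl]; exact (hE₁ Cl hCl).1⟩)
      (by simpa [Lit.compl_compl] using hC)
      (fun Cu hCu => ⟨(hE₂ Cu hCu).2, by rw [Lit.compl_compl]; exact (hE₂ Cu hCu).1⟩) h'
    simpa [Lit.compl_compl] using this
  · rintro ⟨h1, h2⟩ v hX
    by_cases hl : l.eval v = true
    · have h2' : ∀ v : Nat → Bool,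
          ((∀ Cl ∈ B, clauseSat v (Cl.erase l.compl)) ∧ (∀ Cl ∈ E₁, clauseSat v Cl)) →
          (∃ Cu ∈ D, cubeSat v (Cu.erase l.compl.compl)) ∨ (∃ Cu ∈ E₂, cubeSat v Cu) := by
        simpa [Lit.compl_compl] using h2
      have := helper_bwd l.compl B A E₁ D C E₂ h2' v
        (by rw [Lit.compl_eval, hl]; rfl)
        (by rwa [Finset.union_comm B A])
      rwa [Finset.union_comm D C] at this
    · exact helper_bwd l A B E₁ C D E₂ h1 v (Bool.eq_false_iff.2 hl) hX
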